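/- Let p ∈ (2, 8/3), r > 0 and A, B, C > 0. Then the function φ(t) = (t²/2) r A + (t/4) r² q B − (t^{3p/2−3}/p) r^{p/2} λ C on (0,∞) has exactly one critical point t⁺ > 0, which is a global minimum, and φ''(t⁺) > 0. -/

import Mathlib

noncomputable section

/-- The abstract fiber map `φ(t) = (t²/2) r A + (t/4) r² q B − (t^{3p/2−3}/p) r^{p/2} λ C`,
i.e. `φ_{r,u}(t) = E(r^{1/2} u^t)` with `A = ∫|∇u|²`, `B = ∫φ_u u²`, `C = ∫|u|^p`. -/
def fiber (r q lam p A B C : ℝ) (t : ℝ) : ℝ :=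
  t ^ 2 / 2 * r * A + t / 4 * r ^ 2 * q * B - t ^ (3 * p / 2 - 3) / p * r ^ (p / 2) * lam * C

/-- The formula for `φ'`. -/
def fiberD (r q lam p A B C : ℝ) (t : ℝ) : ℝ :=
  t * r * A + r ^ 2 / 4 * q * B
    - 3 * (p - 2) / (2 * p) * t ^ (3 * p / 2 - 4) * r ^ (p / 2) * lam * C

/-- The formula for `φ''`. -/
def fiberDD (r q lam p A B C : ℝ) (t : ℝ) : ℝ :=
  r * A - 3 * (p - 2) * (3 * p - 8) / (4 * p) * t ^ (3 * p / 2 - 5) * r ^ (p / 2) * lam * C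

lemma fiber_hasDerivAt (r q lam p A B C : ℝ) (hp0 : 0 < p) {t : ℝ} (ht : 0 < t) :
    HasDerivAt (fiber r q lam p A B C) (fiberD r q lam p A B C t) t := by
  have h3 : HasDerivAt (fun x : ℝ => x ^ (3*p/2-3)) ((3*p/2-3) * t ^ (3*p/2-3-1)) t :=
    Real.hasDerivAt_rpow_const (Or.inl ht.ne')
  have h := ((((hasDerivAt_pow 2 t).div_const 2).mul_const r).mul_const A).add
      (((((hasDerivAt_id t).div_const 4).mul_const (r^2)).mul_const q).mul_const B)
    |>.sub ((((h3.div_const p).mul_const (r^(p/2))).mul_const lam).mul_const C)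
  have hf : fiber r q lam p A B C = fun t : ℝ =>
      t ^ 2 / 2 * r * A + t / 4 * r ^ 2 * q * B
        - t ^ (3 * p / 2 - 3) / p * r ^ (p / 2) * lam * C := rfl
  rw [hf]
  refine h.congr_deriv ?_; symm
  rw [fiberD, show 3*p/2-3-1 = 3*p/2-4 by ring]
  have hco : 3*(p-2)/(2*p) = (3*p/2-3)/p := by
    rw [div_eq_div_iff (by linarith) (by linarith)]; ring
  rw [hco]
  norm_num
  ring

lemma fiberD_hasDerivAt (r q lam p A B C : ℝ) (hp0 : 0 < p) {t : ℝ} (ht : 0 < t) :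
    HasDerivAt (fiberD r q lam p A B C) (fiberDD r q lam p A B C t) t := by
  have h3 : HasDerivAt (fun x : ℝ => x ^ (3*p/2-4)) ((3*p/2-4) * t ^ (3*p/2-4-1)) t :=
    Real.hasDerivAt_rpow_const (Or.inl ht.ne')
  have h := (((hasDerivAt_id t).mul_const r).mul_const A).add
      (hasDerivAt_const t (r ^ 2 / 4 * q * B))
    |>.sub ((((h3.const_mul (3*(p-2)/(2*p))).mul_const (r^(p/2))).mul_const lam).mul_const C)
  have hf : fiberD r q lam p A B C = fun t : ℝ =>
      t * r * A + r ^ 2 / 4 * q * B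
        - 3 * (p - 2) / (2 * p) * t ^ (3 * p / 2 - 4) * r ^ (p / 2) * lam * C := rfl
  rw [hf]
  refine h.congr_deriv ?_; symm
  rw [fiberDD, show 3*p/2-4-1 = 3*p/2-5 by ring]
  have hco : 3*(p-2)*(3*p-8)/(4*p) = 3*(p-2)/(2*p) * (3*p/2-4) := by
    rw [div_mul_eq_mul_div, div_eq_div_iff (by linarith) (by linarith)]; ring
  rw [hco]
  ring

/-- For `p ∈ (2, 8/3)` the fiber map has exactly one critical point on `(0,∞)`, which is a
global minimum, and the second derivative there is positive. -/
theorem stmt10 (r q lam p A B C : ℝ) (hr : 0 < r) (hq : 0 < q) (hlam : 0 < lam)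
    (hp1 : 2 < p) (hp2 : p < 8 / 3) (hA : 0 < A) (hB : 0 < B) (hC : 0 < C) :
    ∃ tp : ℝ, 0 < tp ∧
      deriv (fiber r q lam p A B C) tp = 0 ∧
      (∀ s : ℝ, 0 < s → deriv (fiber r q lam p A B C) s = 0 → s = tp) ∧
      (∀ s : ℝ, 0 < s → fiber r q lam p A B C tp ≤ fiber r q lam p A B C s) ∧
      0 < deriv (deriv (fiber r q lam p A B C)) tp := by
  have hp0 : (0:ℝ) < p := by linarith
  set F := fiber r q lam p A B C with hF
  set G := fiberD r q lam p A B C with hG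
  -- deriv F = G on (0,∞)
  have hdF : ∀ t : ℝ, 0 < t → deriv F t = G t := fun t ht =>
    (fiber_hasDerivAt r q lam p A B C hp0 ht).deriv
  -- second derivative positive everywhere on (0,∞)
  have hDDpos : ∀ t : ℝ, 0 < t → 0 < fiberDD r q lam p A B C t := by
    intro t ht
    rw [fiberDD]
    have h2 : 3 * (p-2) * (3*p-8) / (4*p) < 0 := by
      apply div_neg_of_neg_of_pos
      · nlinarith
      · linarith
    have h3 : 0 < t ^ (3*p/2-5) := Real.rpow_pos_of_pos ht _
    have h4 : 0 < r ^ (p/2) := Real.rpow_pos_of_pos hr _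
    have h5 : 3 * (p-2) * (3*p-8) / (4*p) * t ^ (3*p/2-5) * r ^ (p/2) * lam * C < 0 := by
      apply mul_neg_of_neg_of_pos _ hC
      apply mul_neg_of_neg_of_pos _ hlam
      apply mul_neg_of_neg_of_pos _ h4
      exact mul_neg_of_neg_of_pos h2 h3
    nlinarith [mul_pos hr hA]
  -- G strictly increasing on (0,∞)
  have hmono : StrictMonoOn G (Set.Ioi 0) := by
    apply strictMonoOn_of_deriv_pos (convex_Ioi 0)
    · exact fun t ht => (fiberD_hasDerivAt r q lam p A B C hp0 ht).continuousAt.continuousWithinAt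
    · intro t ht
      rw [interior_Ioi] at ht
      rw [(fiberD_hasDerivAt r q lam p A B C hp0 ht).deriv]
      exact hDDpos t ht
  -- find sign change of G
  set K : ℝ := r ^ 2 / 4 * q * B with hK
  set M : ℝ := 3 * (p - 2) / (2 * p) * r ^ (p / 2) * lam * C with hM
  have hKpos : 0 < K := by positivity
  have hMpos : 0 < M := by
    have h1 : 0 < 3 * (p - 2) / (2 * p) := div_pos (by linarith) (by linarith)
    have h4 : 0 < r ^ (p/2) := Real.rpow_pos_of_pos hr _
    positivity
  have hGform : ∀ t : ℝ, G t = t * r * A + K - M * t ^ (3*p/2-4) := by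
    intro t; rw [hG, fiberD, hK, hM]; ring
  have hβ : 3*p/2-4 < 0 := by linarith
  -- lower endpoint
  set c : ℝ := (r * A + K + M) / M with hc
  have hc1 : 1 < c := by
    rw [hc, lt_div_iff₀ hMpos]
    nlinarith [mul_pos hr hA]
  set t₀ : ℝ := c ^ (1 / (3*p/2-4)) with ht₀def
  have hc0 : (0:ℝ) < c := by linarith
  have ht₀pos : 0 < t₀ := Real.rpow_pos_of_pos hc0 _
  have ht₀lt1 : t₀ < 1 :=
    Real.rpow_lt_one_of_one_lt_of_neg hc1 (div_neg_of_pos_of_neg one_pos hβ)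
  have ht₀pow : t₀ ^ (3*p/2-4) = c := by
    rw [ht₀def, ← Real.rpow_mul hc0.le, one_div, inv_mul_cancel₀ (ne_of_lt hβ), Real.rpow_one]
  have hGt₀ : G t₀ < 0 := by
    rw [hGform, ht₀pow, hc, mul_div_cancel₀ _ hMpos.ne']
    nlinarith [mul_pos hr hA]
  -- upper endpoint
  set t₁ : ℝ := max 1 ((M + 1) / (r * A)) with ht₁def
  have ht₁1 : 1 ≤ t₁ := le_max_left _ _
  have hrA : 0 < r * A := mul_pos hr hA
  have ht₁M : M + 1 ≤ t₁ * (r * A) := by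
    rw [← div_le_iff₀ hrA]
    exact le_max_right _ _
  have ht₁pow : t₁ ^ (3*p/2-4) ≤ 1 :=
    Real.rpow_le_one_of_one_le_of_nonpos ht₁1 hβ.le
  have hGt₁ : 0 < G t₁ := by
    rw [hGform]
    have : M * t₁ ^ (3*p/2-4) ≤ M * 1 := by
      exact mul_le_mul_of_nonneg_left ht₁pow hMpos.le
    nlinarith
  have ht01 : t₀ ≤ t₁ := le_trans ht₀lt1.le ht₁1
  -- IVT
  have hcont : ContinuousOn G (Set.Icc t₀ t₁) := fun t ht =>
    (fiberD_hasDerivAt r q lam p A B C hp0 (lt_of_lt_of_le ht₀pos ht.1)).continuousAt.continuousWithinAt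
  obtain ⟨tp, htpmem, htp0⟩ := intermediate_value_Icc ht01 hcont ⟨hGt₀.le, hGt₁.le⟩
  have htppos : 0 < tp := lt_of_lt_of_le ht₀pos htpmem.1
  refine ⟨tp, htppos, ?_, ?_, ?_, ?_⟩
  · rw [hdF tp htppos]; exact htp0
  · intro s hs hds
    rw [hdF s hs] at hds
    exact hmono.injOn hs htppos (by rw [hds, htp0])
  · -- global minimum
    have hantiF : StrictAntiOn F (Set.Ioc 0 tp) := by
      apply strictAntiOn_of_deriv_neg (convex_Ioc 0 tp)
      · exact fun t ht =>
          (fiber_hasDerivAt r q lam p A B C hp0 ht.1).continuousAt.continuousWithinAt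
      · intro t ht
        rw [interior_Ioc] at ht
        rw [hdF t ht.1, ← htp0]
        exact hmono ht.1 htppos ht.2
    have hmonoF : StrictMonoOn F (Set.Ici tp) := by
      apply strictMonoOn_of_deriv_pos (convex_Ici tp)
      · exact fun t ht =>
          (fiber_hasDerivAt r q lam p A B C hp0 (lt_of_lt_of_le htppos ht)).continuousAt.continuousWithinAt
      · intro t ht
        rw [interior_Ici] at ht
        rw [hdF t (htppos.trans ht), ← htp0]
        exact hmono (Set.mem_Ioi.2 htppos) (Set.mem_Ioi.2 (htppos.trans ht)) ht
    intro s hs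
    rcases lt_trichotomy s tp with h | h | h
    · exact (hantiF ⟨hs, h.le⟩ ⟨htppos, le_refl tp⟩ h).le
    · rw [h]
    · exact (hmonoF (Set.mem_Ici.2 (le_refl tp)) (Set.mem_Ici.2 h.le) h).le
  · -- second derivative
    have heq : deriv F =ᶠ[nhds tp] G := by
      filter_upwards [Ioi_mem_nhds htppos] with x hx using hdF x hx
    rw [heq.deriv_eq, (fiberD_hasDerivAt r q lam p A B C hp0 htppos).deriv]
    exact hDDpos tp htppos


end
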